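/- Let E ⊆ ℝ^k be open, q, λ ∈ ℝ, let A : E → ℝ^{k×k} take symmetric values, Σ : E → ℝ^{n×n} take invertible values, Υ : E → ℝ^{n×k}, b : E → ℝ^k, μ : E → ℝ^n, V : E → ℝ, and let v : E → ℝ be twice differentiable. Suppose v satisfies, for all y ∈ E, V + (1/2)∇vᵀ(A − qΥᵀΣ⁻¹Υ)∇v + ∇vᵀ(b − qΥᵀΣ⁻¹μ) + (1/2)trace(A·D²v) = λ. Define the operator L by (Lf)(y) = ∇f(y)ᵀ( b(y) − q(ΥᵀΣ⁻¹μ)(y) + (A(y) − q(ΥᵀΣ⁻¹Υ)(y))∇v(y) ) + (1/2)trace(A(y)·D²f(y)) for f twice differentiable. Then for every α ∈ ℝ and every y ∈ E, L(e^{αv})(y) = α e^{αv(y)} ( (1/2)∇v(y)ᵀ( (1+α)A(y) − q(ΥᵀΣ⁻¹Υ)(y) )∇v(y) + λ − V(y) ). -/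

import Mathlib

open Matrix

/-- The gradient of `v : ℝ^k → ℝ`, encoded via partial derivatives. -/
noncomputable def grad {k : ℕ} (v : (Fin k → ℝ) → ℝ) (y : Fin k → ℝ) : Fin k → ℝ :=
  fun i => fderiv ℝ v y (Pi.single i 1)

/-- The Hessian matrix of `v : ℝ^k → ℝ`, encoded via iterated partial derivatives. -/
noncomputable def hess {k : ℕ} (v : (Fin k → ℝ) → ℝ) (y : Fin k → ℝ) :
    Matrix (Fin k) (Fin k) ℝ :=
  Matrix.of fun i j => fderiv ℝ (fun z => fderiv ℝ v z (Pi.single j 1)) y (Pi.single i 1)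

private lemma trace_mul_vecMulVec {k : ℕ} (A : Matrix (Fin k) (Fin k) ℝ) (g : Fin k → ℝ) :
    (A * Matrix.vecMulVec g g).trace = g ⬝ᵥ A.mulVec g := by
  simp [Matrix.trace, Matrix.diag, Matrix.mul_apply, Matrix.vecMulVec_apply,
    dotProduct, Matrix.mulVec, Finset.mul_sum]
  exact Finset.sum_congr rfl fun i _ => Finset.sum_congr rfl fun j _ => by ring

/-- Key identity in the proof of Theorem 2.2: if `v` solves the ergodic HJB equation
(2.1) on the open set `E`, then the generator `L` of the state variable under the myopic
probability satisfies, for every `α ∈ ℝ` and `y ∈ E`,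
`L(e^{αv})(y) = α e^{αv(y)} ((1/2)∇vᵀ((1+α)A − qΥᵀΣ⁻¹Υ)∇v + λ − V)`.
(`S` plays the role of `Σ`, `U` the role of `Υ`.) -/
theorem myopic_generator_exponential_identity {k n : ℕ} (E : Set (Fin k → ℝ))
    (hE : IsOpen E) (q lam : ℝ)
    (A : (Fin k → ℝ) → Matrix (Fin k) (Fin k) ℝ) (hA : ∀ y ∈ E, (A y).IsSymm)
    (S : (Fin k → ℝ) → Matrix (Fin n) (Fin n) ℝ) (hS : ∀ y ∈ E, IsUnit (S y))
    (U : (Fin k → ℝ) → Matrix (Fin n) (Fin k) ℝ)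
    (b : (Fin k → ℝ) → Fin k → ℝ) (μ : (Fin k → ℝ) → Fin n → ℝ)
    (V : (Fin k → ℝ) → ℝ) (v : (Fin k → ℝ) → ℝ)
    (hv1 : ∀ y ∈ E, DifferentiableAt ℝ v y)
    (hv2 : ∀ y ∈ E, DifferentiableAt ℝ (fderiv ℝ v) y)
    (hHJB : ∀ y ∈ E,
      V y + (1 / 2) * (grad v y ⬝ᵥ ((A y - q • ((U y)ᵀ * (S y)⁻¹ * U y)).mulVec (grad v y)))
        + grad v y ⬝ᵥ (b y - q • ((U y)ᵀ * (S y)⁻¹).mulVec (μ y))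
        + (1 / 2) * (A y * hess v y).trace = lam) :
    ∀ α : ℝ, ∀ y ∈ E,
      grad (fun z => Real.exp (α * v z)) y ⬝ᵥ
          (b y - q • ((U y)ᵀ * (S y)⁻¹).mulVec (μ y)
            + (A y - q • ((U y)ᵀ * (S y)⁻¹ * U y)).mulVec (grad v y))
        + (1 / 2) * (A y * hess (fun z => Real.exp (α * v z)) y).trace
      = α * Real.exp (α * v y) *
          ((1 / 2) * (grad v y ⬝ᵥ
              (((1 + α) • A y - q • ((U y)ᵀ * (S y)⁻¹ * U y)).mulVec (grad v y)))
            + lam - V y) := by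
  intro α y hy
  -- the derivative of `exp (α v ·)` on `E`
  have hexp : ∀ z ∈ E, HasFDerivAt (fun w => Real.exp (α * v w))
      (Real.exp (α * v z) • (α • fderiv ℝ v z)) z := fun z hz =>
    ((hv1 z hz).hasFDerivAt.const_mul α).exp
  set e := Real.exp (α * v y) with he
  set g := grad v y with hg
  -- gradient of the exponential
  have hgrad : grad (fun z => Real.exp (α * v z)) y = (α * e) • g := by
    funext i
    simp only [grad, (hexp y hy).fderiv, ContinuousLinearMap.smul_apply, smul_eq_mul,
      Pi.smul_apply]
    rw [hg]
    simp only [grad]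
    ring
  -- the partial derivatives of the exponential agree with an explicit formula near `y`
  have hEq : ∀ j : Fin k, (fun z => fderiv ℝ (fun w => Real.exp (α * v w)) z (Pi.single j 1))
      =ᶠ[nhds y] fun z => α * Real.exp (α * v z) * fderiv ℝ v z (Pi.single j 1) := by
    intro j
    filter_upwards [hE.mem_nhds hy] with z hz
    simp only [(hexp z hz).fderiv, ContinuousLinearMap.smul_apply, smul_eq_mul]
    ring
  -- Hessian of the exponential
  have hhess : hess (fun z => Real.exp (α * v z)) y
      = (α * e) • hess v y + (α * α * e) • Matrix.vecMulVec g g := by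
    ext i j
    have hGdiff : DifferentiableAt ℝ (fun z => fderiv ℝ v z (Pi.single j 1)) y :=
      (hv2 y hy).clm_apply (differentiableAt_const _)
    have hF : HasFDerivAt (fun z => α * Real.exp (α * v z))
        (α • (Real.exp (α * v y) • (α • fderiv ℝ v y))) y := (hexp y hy).const_mul α
    have hprod : HasFDerivAt (fun z => α * Real.exp (α * v z) * fderiv ℝ v z (Pi.single j 1)) _ y :=
      hF.mul hGdiff.hasFDerivAt
    have h1 : hess (fun z => Real.exp (α * v z)) y i j
        = fderiv ℝ (fun z => α * Real.exp (α * v z) * fderiv ℝ v z (Pi.single j 1)) y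
            (Pi.single i 1) := by
      simp only [hess, Matrix.of_apply]
      rw [(hEq j).fderiv_eq]
    rw [h1, hprod.fderiv]
    simp only [ContinuousLinearMap.add_apply, ContinuousLinearMap.smul_apply, smul_eq_mul,
      Matrix.add_apply, Matrix.smul_apply, Matrix.vecMulVec_apply]
    have h2 : fderiv ℝ (fun z => fderiv ℝ v z (Pi.single j 1)) y (Pi.single i 1)
        = hess v y i j := rfl
    rw [h2]
    have h3 : fderiv ℝ v y (Pi.single j 1) = g j := rfl
    have h4 : fderiv ℝ v y (Pi.single i 1) = g i := rfl
    rw [h3, h4]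
    ring
  rw [hgrad, hhess]
  -- now everything is algebra
  have hHJB' := hHJB y hy
  set M := (U y)ᵀ * (S y)⁻¹ * U y with hM
  set r := ((U y)ᵀ * (S y)⁻¹).mulVec (μ y) with hr
  simp only [Matrix.sub_mulVec, Matrix.smul_mulVec, Matrix.add_mulVec,
    dotProduct_sub, dotProduct_add, dotProduct_smul, smul_dotProduct, smul_eq_mul,
    Matrix.mul_add, Matrix.mul_smul, Matrix.trace_add, Matrix.trace_smul,
    trace_mul_vecMulVec] at hHJB' ⊢
  linear_combination (α * e) * hHJB'
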